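/- Let (Ω, μ) be a measure space with μ(Ω) < ∞. Let α : ℝ → ℝ be monotone (nondecreasing), let σ > 0 and S₋ ≤ 0 ≤ S₊, and assume α(r) − α(S₊) ≥ 2σ(r − S₊) for every r ≥ S₊ and α(S₋) − α(r) ≥ 2σ(S₋ − r) for every r ≤ S₋. Then there exists c ≥ 0, depending only on σ, S₋, S₊, α(S₋), α(S₊) and μ(Ω), such that for every measurable square-integrable function v : Ω → ℝ for which x ↦ α(v(x))·v(x) is integrable, one has ∫_Ω α(v(x))·v(x) dμ ≥ σ·∫_Ω v(x)² dμ − c. -/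

import Mathlib

open MeasureTheory

/-- Inequality (2.10) of the paper: the L²-coercivity of the superposition
operator induced by a monotone real function whose increments grow at rate at
least `2σ` outside the bounded interval `[S₋, S₊]`, on a finite measure space. -/
theorem stmt_1 {Ω : Type*} [MeasurableSpace Ω] (μ : Measure Ω) [IsFiniteMeasure μ]
    (α : ℝ → ℝ) (hα : Monotone α) (σ Sm Sp : ℝ)
    (hσ : 0 < σ) (hSm : Sm ≤ 0) (hSp : 0 ≤ Sp)
    (hup : ∀ r : ℝ, Sp ≤ r → α r - α Sp ≥ 2 * σ * (r - Sp))
    (hdown : ∀ r : ℝ, r ≤ Sm → α Sm - α r ≥ 2 * σ * (Sm - r)) :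
    ∃ c : ℝ, 0 ≤ c ∧ ∀ v : Ω → ℝ, Measurable v → MemLp v 2 μ →
      Integrable (fun x => α (v x) * v x) μ →
      ∫ x, α (v x) * v x ∂μ ≥ σ * ∫ x, (v x) ^ 2 ∂μ - c := by
  set B : ℝ := max Sp (-Sm) with hB
  set M : ℝ := max |α Sm| |α Sp| with hM
  set K : ℝ := max ((α Sp - 2*σ*Sp)^2 / (4*σ))
      (max ((α Sm - 2*σ*Sm)^2 / (4*σ)) (σ*B^2 + M*B)) with hK
  have hB0 : 0 ≤ B := le_trans hSp (le_max_left _ _)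
  have hM0 : 0 ≤ M := le_trans (abs_nonneg _) (le_max_left _ _)
  have hK0 : 0 ≤ K := by
    have : 0 ≤ (α Sp - 2*σ*Sp)^2 / (4*σ) :=
      div_nonneg (sq_nonneg _) (by linarith)
    exact le_trans this (le_max_left _ _)
  have key : ∀ r : ℝ, σ * r ^ 2 - K ≤ α r * r := by
    intro r
    rcases le_or_gt Sp r with hr | hr
    · have h1 := hup r hr
      have hr0 : 0 ≤ r := le_trans hSp hr
      have hK1 : (α Sp - 2*σ*Sp)^2 / (4*σ) ≤ K := le_max_left _ _
      have h2 : (α Sp - 2*σ*Sp)^2 ≤ 4*σ*K := by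
        rw [div_le_iff₀ (by linarith : (0:ℝ) < 4*σ)] at hK1
        linarith [hK1]
      nlinarith [sq_nonneg (2*σ*r + (α Sp - 2*σ*Sp)), mul_nonneg (by linarith : (0:ℝ) ≤ α r - α Sp - 2*σ*(r - Sp)) hr0]
    rcases le_or_gt r Sm with hr' | hr'
    · have h1 := hdown r hr'
      have hr0 : r ≤ 0 := le_trans hr' hSm
      have hK1 : (α Sm - 2*σ*Sm)^2 / (4*σ) ≤ K :=
        le_trans (le_max_left _ _) (le_max_right _ _)
      have h2 : (α Sm - 2*σ*Sm)^2 ≤ 4*σ*K := by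
        rw [div_le_iff₀ (by linarith : (0:ℝ) < 4*σ)] at hK1
        linarith [hK1]
      nlinarith [sq_nonneg (2*σ*r + (α Sm - 2*σ*Sm)), mul_nonneg (by linarith : (0:ℝ) ≤ α Sm - α r - 2*σ*(Sm - r)) (by linarith : (0:ℝ) ≤ -r)]
    · -- Sm < r < Sp
      have hrB : |r| ≤ B := by
        rw [abs_le]
        constructor
        · have : -B ≤ Sm := by
            have := le_max_right Sp (-Sm); linarith
          linarith
        · exact le_trans hr.le (le_max_left _ _)
      have hαB : |α r| ≤ M := by
        rcases abs_cases (α r) with ⟨h, _⟩ | ⟨h, _⟩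
        · rw [h]
          exact le_trans (hα hr.le) (le_trans (le_abs_self _) (le_max_right _ _))
        · rw [h]
          have := hα hr'.le
          have : -α r ≤ -α Sm := by linarith
          exact le_trans this (le_trans (neg_le_abs _) (le_max_left _ _))
      have h1 : -(M*B) ≤ α r * r := by
        have := abs_mul (α r) r
        have h2 : |α r * r| ≤ M*B := by
          rw [abs_mul]
          exact mul_le_mul hαB hrB (abs_nonneg _) hM0
        linarith [neg_abs_le (α r * r)]
      have h2 : σ * r^2 ≤ σ * B^2 := by
        have : r^2 ≤ B^2 := by
          rw [← sq_abs r]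
          exact pow_le_pow_left₀ (abs_nonneg _) hrB 2
        nlinarith
      have hK1 : σ*B^2 + M*B ≤ K :=
        le_trans (le_max_right _ _) (le_max_right _ _)
      linarith
  refine ⟨K * (μ Set.univ).toReal, mul_nonneg hK0 ENNReal.toReal_nonneg, ?_⟩
  intro v hv hv2 hint
  have hvsq : Integrable (fun x => (v x) ^ 2) μ := by
    have := hv2.integrable_sq
    simpa [sq] using this
  have hle : ∀ x, σ * (v x) ^ 2 - K ≤ α (v x) * v x := fun x => key (v x)
  have hmono : ∫ x, (σ * (v x) ^ 2 - K) ∂μ ≤ ∫ x, α (v x) * v x ∂μ :=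
    integral_mono ((hvsq.const_mul σ).sub (integrable_const K)) hint hle
  have hcomp : ∫ x, (σ * (v x) ^ 2 - K) ∂μ
      = σ * ∫ x, (v x) ^ 2 ∂μ - K * (μ Set.univ).toReal := by
    rw [integral_sub (hvsq.const_mul σ) (integrable_const K),
      integral_const_mul, integral_const, smul_eq_mul, measureReal_def]; ring
  linarith [hmono, hcomp.ge, hcomp.le]
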